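/- For any α > 0 and κ > 0 there exists a constant C₁ > α/μ + κ/p such that for all sufficiently small ε > 0 the following holds: |Y(C₁|log ε|, ξ) − 1| ≤ ε^κ for all ξ ∈ [ε^α, 2C₀], and |Y(C₁|log ε|, ξ) + 1| ≤ ε^κ for all ξ ∈ [−2C₀, −ε^α]. Moreover C₁ can be chosen depending only on α, κ and f. -/

import Mathlib

set_option maxHeartbeats 1000000

open Set Filter Topology


lemma core (h H : ℝ → ℝ) (a b : ℝ)
    (hd : ∀ τ ∈ Icc a b, HasDerivAt h (H τ) τ)
    (hpos : ∀ τ ∈ Icc a b, h τ = 0 → 0 < H τ)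
    (h0 : 0 ≤ h a) : ∀ τ ∈ Icc a b, 0 ≤ h τ := by
  intro τ' hτ'
  by_contra hneg
  push_neg at hneg
  set S : Set ℝ := {τ | τ ∈ Icc a τ' ∧ 0 ≤ h τ} with hS
  have hSne : S.Nonempty := ⟨a, ⟨le_refl a, hτ'.1⟩, h0⟩
  have hSbdd : BddAbove S := ⟨τ', fun x hx => hx.1.2⟩
  have hsub : Icc a τ' ⊆ Icc a b := Icc_subset_Icc le_rfl hτ'.2
  have hcont : ContinuousOn h (Icc a τ') := fun x hx =>
    ((hd x (hsub hx)).continuousAt).continuousWithinAt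
  have hSclosed : IsClosed S := by
    have hEq : S = Icc a τ' ∩ h ⁻¹' (Ici 0) := by
      ext x; simp [hS, Set.mem_setOf_eq, Set.mem_inter_iff, Set.mem_preimage, Set.mem_Ici]
    rw [hEq]
    exact hcont.preimage_isClosed_of_isClosed isClosed_Icc isClosed_Ici
  set s := sSup S with hs
  have hsS : s ∈ S := hSclosed.csSup_mem hSne hSbdd
  have hs_lt : s < τ' := hsS.1.2.lt_of_ne (fun he => absurd (he ▸ hsS.2) (not_le.2 hneg))
  have hafter : ∀ τ, s < τ → τ ≤ τ' → h τ < 0 := by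
    intro τ h1 h2
    by_contra hge
    push_neg at hge
    exact absurd (le_csSup hSbdd ⟨⟨hsS.1.1.trans h1.le, h2⟩, hge⟩) (not_le.2 h1)
  have hev_lt : ∀ᶠ x in 𝓝[>] s, x < τ' :=
    eventually_nhdsWithin_of_eventually_nhds (eventually_lt_nhds hs_lt)
  have hev_gt : ∀ᶠ x in 𝓝[>] s, s < x := eventually_mem_nhdsWithin
  rcases hsS.2.lt_or_eq with hlt | heq
  · -- 0 < h s
    have hc : ContinuousAt h s := (hd s (hsub hsS.1)).continuousAt
    have hev : ∀ᶠ x in 𝓝[>] s, 0 < h x :=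
      eventually_nhdsWithin_of_eventually_nhds (hc.eventually (eventually_gt_nhds hlt))
    obtain ⟨x, hx1, hx2, hx3⟩ := (hev.and (hev_lt.and hev_gt)).exists
    exact absurd (hafter x hx3 hx2.le) (not_lt.2 hx1.le)
  · -- h s = 0
    have hHpos : 0 < H s := hpos s (hsub hsS.1) heq.symm
    have hslope : Tendsto (slope h s) (𝓝[>] s) (𝓝 (H s)) :=
      (hasDerivAt_iff_tendsto_slope.mp (hd s (hsub hsS.1))).mono_left
        (nhdsWithin_mono s fun x hx => ne_of_gt hx)
    have hev : ∀ᶠ x in 𝓝[>] s, 0 < slope h s x := hslope.eventually (eventually_gt_nhds hHpos)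
    obtain ⟨x, hx1, hx2, hx3⟩ := (hev.and (hev_lt.and hev_gt)).exists
    have : 0 < h x := by
      have := hx1
      rw [slope_def_field] at this
      have hxs : 0 < x - s := sub_pos.2 hx3
      have := mul_pos this hxs
      rw [div_mul_cancel₀ _ (ne_of_gt hxs)] at this
      have hs0 : h s = 0 := heq.symm
      linarith
    exact absurd (hafter x hx3 hx2.le) (not_lt.2 this.le)

lemma mvt_ge (g d : ℝ → ℝ) (a b c : ℝ) (hab : a ≤ b)
    (hg : ∀ τ ∈ Icc a b, HasDerivAt g (d τ) τ)
    (hd : ∀ τ ∈ Icc a b, c < d τ) :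
    c * (b - a) ≤ g b - g a := by
  have key := core (fun τ => g τ - g a - c * τ + c * a) (fun τ => d τ - c) a b
    (fun τ hτ => by
      have h1 := (((hg τ hτ).sub_const (g a)).sub ((hasDerivAt_id τ).const_mul c)).add_const (c * a)
      simpa using h1)
    (fun τ hτ _ => sub_pos.2 (hd τ hτ))
    (by simp)
  have hb := key b ⟨hab, le_refl b⟩
  nlinarith [hb]

lemma barrier_lower (f g : ℝ → ℝ) (c τ₀ : ℝ) (hτ₀ : 0 ≤ τ₀)
    (hgode : ∀ τ : ℝ, 0 ≤ τ → HasDerivAt g (f (g τ)) τ)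
    (hfc : 0 < f c) (hgc : c ≤ g τ₀) : ∀ τ, τ₀ ≤ τ → c ≤ g τ := by
  intro τ hτ
  have key := core (fun t => g t - c) (fun t => f (g t)) τ₀ τ
    (fun t ht => (hgode t (le_trans hτ₀ ht.1)).sub_const c)
    (fun t ht h0 => by
      have h0' : g t - c = 0 := h0
      show 0 < f (g t)
      have hgt : g t = c := by linarith
      rw [hgt]; exact hfc)
    (by simp; linarith)
  have := key τ ⟨hτ, le_refl τ⟩
  simp at this; linarith

lemma barrier_upper (f g : ℝ → ℝ) (c τ₀ : ℝ) (hτ₀ : 0 ≤ τ₀)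
    (hgode : ∀ τ : ℝ, 0 ≤ τ → HasDerivAt g (f (g τ)) τ)
    (hfc : f c < 0) (hgc : g τ₀ ≤ c) : ∀ τ, τ₀ ≤ τ → g τ ≤ c := by
  intro τ hτ
  have key := core (fun t => c - g t) (fun t => -(f (g t))) τ₀ τ
    (fun t ht => (hgode t (le_trans hτ₀ ht.1)).const_sub c)
    (fun t ht h0 => by
      have h0' : c - g t = 0 := h0
      show 0 < -f (g t)
      have hgt : g t = c := by linarith
      rw [hgt]; linarith)
    (by simp; linarith)
  have := key τ ⟨hτ, le_refl τ⟩
  simp at this; linarith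

lemma setup (f : ℝ → ℝ) (p μ : ℝ) (hf : ContDiff ℝ 2 f) (hp : 0 < p) (hμ : 0 < μ)
    (hzeros : ∀ u : ℝ, f u = 0 ↔ u = -1 ∨ u = 0 ∨ u = 1)
    (hf'1 : deriv f 1 = -p) (hf'0 : deriv f 0 = μ) :
    ∃ δ m : ℝ, 0 < δ ∧ δ < 1/2 ∧ 0 < m ∧
      (∀ u, 0 < u → u ≤ δ → μ/2 * u ≤ f u) ∧
      (∀ u, 1 - δ ≤ u → u < 1 → p/2 * (1-u) ≤ f u) ∧
      (∀ u, δ ≤ u → u ≤ 1 - δ → m ≤ f u) ∧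
      (∀ u, 0 < u → u < 1 → 0 < f u) := by
  have f0 : f 0 = 0 := (hzeros 0).mpr (Or.inr (Or.inl rfl))
  have f1 : f 1 = 0 := (hzeros 1).mpr (Or.inr (Or.inr rfl))
  have hdiff : Differentiable ℝ f := hf.differentiable (by norm_num)
  have hcont : Continuous f := hf.continuous
  have hD0 : HasDerivAt f μ 0 := hf'0 ▸ (hdiff 0).hasDerivAt
  have hD1 : HasDerivAt f (-p) 1 := hf'1 ▸ (hdiff 1).hasDerivAt
  have T0 := hasDerivAt_iff_tendsto_slope.mp hD0
  have T1 := hasDerivAt_iff_tendsto_slope.mp hD1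
  have ev0 : ∀ᶠ x in 𝓝[≠] (0:ℝ), μ/2 < slope f 0 x :=
    T0.eventually (eventually_gt_nhds (by linarith))
  have ev1 : ∀ᶠ x in 𝓝[≠] (1:ℝ), slope f 1 x < -(p/2) :=
    T1.eventually (eventually_lt_nhds (by linarith))
  rw [eventually_nhdsWithin_iff] at ev0 ev1
  obtain ⟨δ₁, hδ₁pos, hδ₁⟩ := Metric.eventually_nhds_iff.mp ev0
  obtain ⟨δ₂, hδ₂pos, hδ₂⟩ := Metric.eventually_nhds_iff.mp ev1
  set δ : ℝ := min (min δ₁ δ₂) (1/2) / 2 with hδdef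
  have hδpos : 0 < δ := by positivity
  have hδhalf : δ < 1/2 := by
    have : min (min δ₁ δ₂) (1/2) ≤ 1/2 := min_le_right _ _
    simp only [hδdef]; linarith
  have hδ1 : δ < δ₁ := by
    have h1 : min (min δ₁ δ₂) (1/2) ≤ δ₁ := le_trans (min_le_left _ _) (min_le_left _ _)
    simp only [hδdef]; linarith
  have hδ2 : δ < δ₂ := by
    have h1 : min (min δ₁ δ₂) (1/2) ≤ δ₂ := le_trans (min_le_left _ _) (min_le_right _ _)
    simp only [hδdef]; linarith
  have hnear0 : ∀ u, 0 < u → u ≤ δ → μ/2 * u ≤ f u := by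
    intro u hu1 hu2
    have hd : dist u 0 < δ₁ := by
      rw [Real.dist_eq, sub_zero, abs_of_pos hu1]; linarith
    have := hδ₁ hd (by simp; linarith)
    rw [slope_def_field, f0, sub_zero, sub_zero] at this
    exact le_of_lt ((lt_div_iff₀ hu1).mp this)
  have hnear1 : ∀ u, 1 - δ ≤ u → u < 1 → p/2 * (1-u) ≤ f u := by
    intro u hu1 hu2
    have hd : dist u 1 < δ₂ := by
      rw [Real.dist_eq, abs_of_neg (by linarith : u - 1 < 0)]; linarith
    have := hδ₂ hd (by simp; linarith)
    rw [slope_def_field, f1, sub_zero] at this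
    rw [div_lt_iff_of_neg (by linarith : u - 1 < 0)] at this
    nlinarith
  have fpos : ∀ u, 0 < u → u < 1 → 0 < f u := by
    intro u hu1 hu2
    rcases lt_trichotomy (f u) 0 with hneg | hzero | hposs
    · exfalso
      set w : ℝ := min u δ / 2 with hw
      have hwpos : 0 < w := by positivity
      have hwδ : w ≤ δ := by
        have := min_le_right u δ; simp only [hw]; linarith
      have hwu : w < u := by
        have := min_le_left u δ; simp only [hw]; linarith
      have hfw : 0 < f w := lt_of_lt_of_le (by positivity) (hnear0 w hwpos hwδ)
      have hsub := intermediate_value_Icc' hwu.le (hcont.continuousOn (s := Icc w u))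
      have h0mem : (0:ℝ) ∈ Icc (f u) (f w) := ⟨hneg.le, hfw.le⟩
      obtain ⟨z, hz, hfz⟩ := hsub h0mem
      rcases (hzeros z).mp hfz with h | h | h <;>
        · rw [h] at hz; rcases hz with ⟨hz1, hz2⟩; linarith
    · exfalso
      rcases (hzeros u).mp hzero with h | h | h <;> linarith
    · exact hposs
  have hIccne : (Icc δ (1-δ)).Nonempty := ⟨δ, le_refl δ, by linarith⟩
  obtain ⟨x₀, hx₀, hmin⟩ := isCompact_Icc.exists_isMinOn hIccne hcont.continuousOn
  refine ⟨δ, f x₀, hδpos, hδhalf, ?_, hnear0, hnear1, ?_, fpos⟩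
  · exact fpos x₀ (lt_of_lt_of_le hδpos hx₀.1) (by linarith [hx₀.2])
  · intro u hu1 hu2
    exact hmin ⟨hu1, hu2⟩

lemma key (f : ℝ → ℝ) (p μ C₀ : ℝ)
    (hf : ContDiff ℝ 2 f)
    (hp : 0 < p) (hμ : 0 < μ) (hC₀ : 1 < C₀)
    (hzeros : ∀ u : ℝ, f u = 0 ↔ u = -1 ∨ u = 0 ∨ u = 1)
    (hf'1 : deriv f 1 = -p) (hf'0 : deriv f 0 = μ)
    (hf_lin : ∀ u : ℝ, 1 ≤ u → f u ≤ -p * (u - 1))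
    (α κ : ℝ) (hα : 0 < α) (hκ : 0 < κ) :
    ∃ C₁ : ℝ, α / μ + κ / p < C₁ ∧
      ∃ ε₀ : ℝ, 0 < ε₀ ∧ ∀ ε : ℝ, 0 < ε → ε < ε₀ →
        ∀ ξ : ℝ, ε ^ α ≤ ξ → ξ ≤ 2 * C₀ →
        ∀ g : ℝ → ℝ, g 0 = ξ →
        (∀ τ : ℝ, 0 ≤ τ → HasDerivAt g (f (g τ)) τ) →
        |g (C₁ * |Real.log ε|) - 1| ≤ ε ^ κ := by
  obtain ⟨δ, m, hδpos, hδhalf, hmpos, hnear0, hnear1, hm, fpos⟩ :=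
    setup f p μ hf hp hμ hzeros hf'1 hf'0
  set lam : ℝ := μ / 3 with hlam_def
  have hlam : 0 < lam := by positivity
  clear_value lam
  set B : ℝ := 2 / m + 4 * C₀ / (p * δ) with hB_def
  have hBpos : 0 < B := by positivity
  clear_value B
  have hK_nonneg : 0 ≤ 4 * C₀ / (p * δ) := by positivity
  have hm2 : 0 ≤ 2 / m := by positivity
  set C₁ : ℝ := 3 * α / μ + 2 * κ / p + 1 with hC₁_def
  clear_value C₁
  have hf1δ : f (1 + δ) < 0 := by
    have h1 := hf_lin (1 + δ) (by linarith)
    nlinarith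
  have hf1mδ : 0 < f (1 - δ) := fpos (1 - δ) (by linarith) (by linarith)
  have hfδ : 0 < f δ := fpos δ hδpos (by linarith)
  refine ⟨C₁, ?_, Real.exp (-B), Real.exp_pos _, ?_⟩
  · have h1 : 0 < α / μ := div_pos hα hμ
    have h2 : 0 < κ / p := div_pos hκ hp
    have e1 : 3 * α / μ = α / μ + α / μ + α / μ := by ring
    have e2 : 2 * κ / p = κ / p + κ / p := by ring
    rw [hC₁_def, e1, e2]; linarith
  intro ε hε hεlt ξ hξ1 hξ2 g hg0 hgode
  -- basic facts about ε
  have hlogε_neg : Real.log ε < -B := by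
    have := Real.log_lt_log hε hεlt
    rwa [Real.log_exp] at this
  have hlogε_neg' : Real.log ε < 0 := by linarith
  set L : ℝ := -Real.log ε with hL_def
  have hLB : B < L := by simp only [hL_def]; linarith
  have hLpos : 0 < L := by linarith
  have habs : |Real.log ε| = L := abs_of_neg hlogε_neg'
  clear_value L
  set T : ℝ := C₁ * |Real.log ε| with hT_def
  have hTL : T = 3 * α / μ * L + 2 * κ / p * L + L := by
    rw [hT_def, habs, hC₁_def]; ring
  clear_value T
  have hξpos : 0 < ξ := lt_of_lt_of_le (Real.rpow_pos_of_pos hε α) hξ1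
  have hlogξ : α * Real.log ε ≤ Real.log ξ := by
    have h1 := Real.log_le_log (Real.rpow_pos_of_pos hε α) hξ1
    rwa [Real.log_rpow hε] at h1
  -- the reach claim
  have hT₁ : (0:ℝ) ≤ 3 * α / μ * L := by positivity
  obtain ⟨τ₁, hτ₁0, hτ₁le, hgτ₁low, hgτ₁high⟩ :
      ∃ τ₁ : ℝ, 0 ≤ τ₁ ∧ τ₁ ≤ 3 * α / μ * L + B ∧ 1 - δ ≤ g τ₁ ∧ g τ₁ ≤ 1 + δ := by
    rcases le_or_gt ξ δ with hcase | hcase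
    · -- Case A : ξ ≤ δ
      set τδ : ℝ := (Real.log δ - Real.log ξ) / lam with hτδ_def
      have hlogle : Real.log ξ ≤ Real.log δ := Real.log_le_log hξpos hcase
      clear_value τδ
      have hτδ0 : 0 ≤ τδ := by
        rw [hτδ_def]; apply div_nonneg _ hlam.le; linarith
      have hτδle : τδ ≤ 3 * α / μ * L := by
        have hnum : Real.log δ - Real.log ξ ≤ α * L := by
          have hδlog : Real.log δ ≤ 0 := Real.log_nonpos hδpos.le (by linarith)
          have : -Real.log ξ ≤ α * L := by
            simp only [hL_def]; linarith [hlogξ]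
          linarith
        have h2 : τδ ≤ (α * L) / lam := by
          rw [hτδ_def]; exact (div_le_div_iff_of_pos_right hlam).mpr hnum
        have h3 : (α * L) / lam = 3 * α / μ * L := by
          rw [hlam_def]; field_simp
        linarith [h2, h3.le]
      -- exponential barrier on [0, τδ]
      have hexpτδ : Real.exp (lam * τδ) = δ / ξ := by
        have : lam * τδ = Real.log δ - Real.log ξ := by
          rw [hτδ_def]; field_simp
        rw [this, Real.exp_sub, Real.exp_log hδpos, Real.exp_log hξpos]
      have hbar := core (fun t => g t - ξ * Real.exp (lam * t))
        (fun t => f (g t) - ξ * (Real.exp (lam * t) * (lam * 1))) 0 τδ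
        (fun t ht => by
          exact (hgode t ht.1).sub (((hasDerivAt_id t).const_mul lam).exp.const_mul ξ))
        (fun t ht h0 => by
          have h0' : g t - ξ * Real.exp (lam * t) = 0 := h0
          show 0 < f (g t) - ξ * (Real.exp (lam * t) * (lam * 1))
          set b := ξ * Real.exp (lam * t) with hb_def
          have hbpos : 0 < b := by positivity
          have hble : b ≤ δ := by
            have hexple : Real.exp (lam * t) ≤ Real.exp (lam * τδ) :=
              Real.exp_le_exp.mpr (mul_le_mul_of_nonneg_left ht.2 hlam.le)
            have : b ≤ ξ * (δ / ξ) := by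
              rw [hb_def, ← hexpτδ]
              exact mul_le_mul_of_nonneg_left hexple hξpos.le
            rwa [mul_div_cancel₀ _ (ne_of_gt hξpos)] at this
          have hgb : g t = b := by linarith
          have hfb : μ / 2 * b ≤ f b := hnear0 b hbpos hble
          rw [hgb]
          have hrw2 : ξ * (Real.exp (lam * t) * (lam * 1)) = lam * b := by rw [hb_def]; ring
          rw [hrw2, hlam_def]
          have hμb : 0 < μ * b := by positivity
          linarith [hfb, hμb])
        (by simp [hg0])
      have hgτδ : δ ≤ g τδ := by
        have := hbar τδ ⟨hτδ0, le_refl _⟩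
        have hx : ξ * Real.exp (lam * τδ) = δ := by
          rw [hexpτδ, mul_div_cancel₀ _ (ne_of_gt hξpos)]
        linarith
      -- static barriers
      have hlow : ∀ τ, τδ ≤ τ → δ ≤ g τ := barrier_lower f g δ τδ hτδ0 hgode hfδ hgτδ
      have hhigh : ∀ τ, 0 ≤ τ → g τ ≤ 1 + δ :=
        barrier_upper f g (1 + δ) 0 le_rfl hgode hf1δ (by rw [hg0]; linarith)
      -- mvt to reach 1 - δ
      by_cases hreach : ∃ t ∈ Icc τδ (τδ + 2/m), 1 - δ ≤ g t
      · obtain ⟨t, ht, hgt⟩ := hreach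
        exact ⟨t, le_trans hτδ0 ht.1, by linarith [ht.2, hτδle, hK_nonneg],
          hgt, hhigh t (le_trans hτδ0 ht.1)⟩
      · exfalso
        push_neg at hreach
        have hmvt := mvt_ge g (fun t => f (g t)) τδ (τδ + 2/m) (m/2) (by linarith)
          (fun t ht => hgode t (le_trans hτδ0 ht.1))
          (fun t ht => by
            have h1 : δ ≤ g t := hlow t ht.1
            have h2 : g t < 1 - δ := hreach t ht
            have := hm (g t) h1 h2.le
            linarith)
        have hone : m/2 * (τδ + 2/m - τδ) = 1 := by
          have hm0 : m ≠ 0 := ne_of_gt hmpos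
          field_simp
          try ring
        have hend := hreach (τδ + 2/m) ⟨by linarith, le_refl _⟩
        have hstart : δ ≤ g τδ := hgτδ
        linarith [hmvt, hone, hend, hstart, hδpos]
    · rcases le_or_gt ξ (1 + δ) with hcase2 | hcase2
      · -- Case B : δ < ξ ≤ 1 + δ
        rcases le_or_gt (1 - δ) ξ with hcase3 | hcase3
        · exact ⟨0, le_rfl, by linarith, by rw [hg0]; linarith, by rw [hg0]; linarith⟩
        · have hlow : ∀ τ, 0 ≤ τ → δ ≤ g τ :=
            barrier_lower f g δ 0 le_rfl hgode hfδ (by rw [hg0]; linarith)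
          have hhigh : ∀ τ, 0 ≤ τ → g τ ≤ 1 + δ :=
            barrier_upper f g (1 + δ) 0 le_rfl hgode hf1δ (by rw [hg0]; linarith)
          by_cases hreach : ∃ t ∈ Icc (0:ℝ) (2/m), 1 - δ ≤ g t
          · obtain ⟨t, ht, hgt⟩ := hreach
            exact ⟨t, ht.1, by linarith [ht.2, hK_nonneg, hT₁], hgt, hhigh t ht.1⟩
          · exfalso
            push_neg at hreach
            have hmvt := mvt_ge g (fun t => f (g t)) 0 (2/m) (m/2) (by positivity)
              (fun t ht => hgode t ht.1)
              (fun t ht => by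
                have h1 : δ ≤ g t := hlow t ht.1
                have h2 : g t < 1 - δ := hreach t ht
                have := hm (g t) h1 h2.le
                linarith)
            have hone : m/2 * (2/m - 0) = 1 := by
              have hm0 : m ≠ 0 := ne_of_gt hmpos
              field_simp
              try ring
            have hend := hreach (2/m) ⟨by positivity, le_refl _⟩
            have hstart : δ ≤ g 0 := by rw [hg0]; linarith
            linarith [hmvt, hone, hend, hstart, hδpos]
      · -- Case C : 1 + δ < ξ
        set K : ℝ := 4 * C₀ / (p * δ) with hK_def
        have hKpos : 0 < K := by positivity
        clear_value K
        have hlow : ∀ τ, 0 ≤ τ → 1 - δ ≤ g τ :=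
          barrier_lower f g (1 - δ) 0 le_rfl hgode hf1mδ (by rw [hg0]; linarith)
        by_cases hreach : ∃ t ∈ Icc (0:ℝ) K, g t ≤ 1 + δ
        · obtain ⟨t, ht, hgt⟩ := hreach
          exact ⟨t, ht.1, by linarith [ht.2, hm2, hT₁], hlow t ht.1, hgt⟩
        · exfalso
          push_neg at hreach
          have hmvt := mvt_ge (fun t => -(g t)) (fun t => -(f (g t))) 0 K (p * δ / 2) hKpos.le
            (fun t ht => (hgode t ht.1).neg)
            (fun t ht => by
              have h1 : 1 + δ < g t := hreach t ht
              have h2 := hf_lin (g t) (by linarith)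
              show p * δ / 2 < -f (g t)
              have h3 : 0 < p * (g t - 1 - δ) := mul_pos hp (by linarith)
              have h4 : p * (g t - 1 - δ) = -(-p * (g t - 1)) - p * δ := by ring
              have h5 : 0 < p * δ := mul_pos hp hδpos
              linarith [h2, h3, h4, h5])
          have hval : p * δ / 2 * (K - 0) = 2 * C₀ := by
            have h0 : p * δ ≠ 0 := ne_of_gt (by positivity)
            rw [hK_def]; field_simp; ring
          have hend := hreach K ⟨hKpos.le, le_refl _⟩
          have hmvt' : p * δ / 2 * (K - 0) ≤ -(g K) - -(g 0) := hmvt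
          linarith [hmvt', hval, hend, hξ2, hg0, hδpos]
  -- invariance after τ₁
  have hlow : ∀ τ, τ₁ ≤ τ → 1 - δ ≤ g τ :=
    barrier_lower f g (1 - δ) τ₁ hτ₁0 hgode hf1mδ hgτ₁low
  have hhigh : ∀ τ, τ₁ ≤ τ → g τ ≤ 1 + δ :=
    barrier_upper f g (1 + δ) τ₁ hτ₁0 hgode hf1δ hgτ₁high
  have hτ₁T : τ₁ ≤ T := by
    have h1 : 0 ≤ 2 * κ / p * L := by positivity
    linarith [hτ₁le, hTL, h1, hLB]
  have hT0 : 0 ≤ T := le_trans hτ₁0 hτ₁T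
  -- contraction via the energy function
  set E : ℝ → ℝ := fun τ => (g τ - 1)^2 * Real.exp (p * τ) with hE_def
  have hEderiv : ∀ x, τ₁ ≤ x →
      HasDerivAt E (2 * (g x - 1) * f (g x) * Real.exp (p * x)
        + (g x - 1)^2 * (Real.exp (p * x) * (p * 1))) x := by
    intro x hx
    have hgx := hgode x (le_trans hτ₁0 hx)
    have h1 : HasDerivAt (fun t => (g t - 1)^2) (2 * (g x - 1) * f (g x)) x := by
      have := (hgx.sub_const 1).pow 2
      simpa [Pi.pow_def] using this
    exact h1.mul (((hasDerivAt_id x).const_mul p).exp)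
  have hanti : AntitoneOn E (Icc τ₁ T) := by
    apply antitoneOn_of_deriv_nonpos (convex_Icc τ₁ T)
    · exact fun x hx => ((hEderiv x hx.1).continuousAt).continuousWithinAt
    · intro x hx
      rw [interior_Icc] at hx
      exact ((hEderiv x hx.1.le).differentiableAt).differentiableWithinAt
    · intro x hx
      rw [interior_Icc] at hx
      rw [(hEderiv x hx.1.le).deriv]
      have hu1 : 1 - δ ≤ g x := hlow x hx.1.le
      have hu2 : g x ≤ 1 + δ := hhigh x hx.1.le
      set u := g x with hu_def
      have hclaim : 2 * (u - 1) * f u + p * (u - 1)^2 ≤ 0 := by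
        rcases le_or_gt u 1 with hle | hgt
        · have hfu : p/2 * (1 - u) ≤ f u := by
            rcases eq_or_lt_of_le hle with heq | hlt
            · rw [heq]
              have : f 1 = 0 := (hzeros 1).mpr (Or.inr (Or.inr rfl))
              simp [this]
            · exact hnear1 u hu1 hlt
          have hmul := mul_le_mul_of_nonneg_left hfu (by linarith : (0:ℝ) ≤ 1 - u)
          nlinarith [hmul]
        · have hfu := hf_lin u hgt.le
          have hmul := mul_le_mul_of_nonneg_left hfu (by linarith : (0:ℝ) ≤ u - 1)
          have hsq : 0 ≤ p * (u - 1)^2 := by positivity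
          nlinarith [hmul, hsq]
      have hrw : 2 * (u - 1) * f u * Real.exp (p * x) + (u - 1)^2 * (Real.exp (p * x) * (p * 1))
          = Real.exp (p * x) * (2 * (u - 1) * f u + p * (u - 1)^2) := by ring
      rw [hrw]
      exact mul_nonpos_of_nonneg_of_nonpos (Real.exp_pos _).le hclaim
  have hET : E T ≤ E τ₁ :=
    hanti (left_mem_Icc.mpr hτ₁T) (right_mem_Icc.mpr hτ₁T) hτ₁T
  have hEτ₁ : E τ₁ ≤ Real.exp (p * τ₁) := by
    have h1 : -(1:ℝ) ≤ g τ₁ - 1 := by linarith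
    have h2 : g τ₁ - 1 ≤ 1 := by linarith
    have hsq : (g τ₁ - 1)^2 ≤ 1 := by simpa using sq_le_sq' h1 h2
    have hEq : E τ₁ = (g τ₁ - 1)^2 * Real.exp (p * τ₁) := rfl
    rw [hEq]
    exact mul_le_of_le_one_left (Real.exp_pos _).le hsq
  have hsqT : (g T - 1)^2 ≤ Real.exp (p * τ₁ - p * T) := by
    rw [Real.exp_sub, le_div_iff₀ (Real.exp_pos _)]
    calc (g T - 1)^2 * Real.exp (p * T) = E T := rfl
    _ ≤ E τ₁ := hET
    _ ≤ Real.exp (p * τ₁) := hEτ₁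
  have hεκpos : (0:ℝ) < ε ^ κ := Real.rpow_pos_of_pos hε κ
  have hfinal : Real.exp (p * τ₁ - p * T) ≤ (ε ^ κ)^2 := by
    rw [Real.rpow_def_of_pos hε, sq, ← Real.exp_add]
    apply Real.exp_le_exp.mpr
    have h4 : 2 * κ / p * L ≤ T - τ₁ := by
      linarith [hτ₁le, hTL, hLB]
    have h5 := mul_le_mul_of_nonneg_left h4 hp.le
    have h6 : p * (2 * κ / p * L) = 2 * κ * L := by field_simp
    have h7 : Real.log ε = -L := by rw [hL_def]; ring
    have h8 : p * (T - τ₁) = p * T - p * τ₁ := by ring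
    rw [h7]; linarith [h5, h6, h8]
  have habs2 : |g T - 1| ≤ ε ^ κ := by
    rw [← Real.sqrt_sq_eq_abs]
    calc Real.sqrt ((g T - 1)^2) ≤ Real.sqrt ((ε ^ κ)^2) :=
          Real.sqrt_le_sqrt (le_trans hsqT hfinal)
    _ = ε ^ κ := Real.sqrt_sq hεκpos.le
  exact habs2


/-- Proposition 3.2 (generation estimate for the ODE flow): for any `α > 0` and `κ > 0`
there exists `C₁ > α/μ + κ/p` such that for all sufficiently small `ε > 0`,
`|Y(C₁|log ε|, ξ) − 1| ≤ ε^κ` for all `ξ ∈ [ε^α, 2C₀]` and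
`|Y(C₁|log ε|, ξ) + 1| ≤ ε^κ` for all `ξ ∈ [−2C₀, −ε^α]`. -/
theorem stmt_0
    (f : ℝ → ℝ) (p μ C₀ : ℝ)
    (hf : ContDiff ℝ 2 f)
    (hp : 0 < p) (hμ : 0 < μ) (hC₀ : 1 < C₀)
    (hzeros : ∀ u : ℝ, f u = 0 ↔ u = -1 ∨ u = 0 ∨ u = 1)
    (hf'1 : deriv f 1 = -p) (hf'm1 : deriv f (-1) = -p)
    (hf'0 : deriv f 0 = μ)
    (hodd : ∀ u : ℝ, f (-u) = -f u)
    (hf_lin : ∀ u : ℝ, 1 ≤ u → f u ≤ -p * (u - 1))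
    (Y : ℝ → ℝ → ℝ)
    (hY0 : ∀ ξ : ℝ, Y 0 ξ = ξ)
    (hYode : ∀ ξ : ℝ, ∀ τ : ℝ, 0 ≤ τ → HasDerivAt (fun t => Y t ξ) (f (Y τ ξ)) τ)
    (α κ : ℝ) (hα : 0 < α) (hκ : 0 < κ) :
    ∃ C₁ : ℝ, α / μ + κ / p < C₁ ∧
      ∃ ε₀ : ℝ, 0 < ε₀ ∧ ∀ ε : ℝ, 0 < ε → ε < ε₀ →
        (∀ ξ : ℝ, ε ^ α ≤ ξ → ξ ≤ 2 * C₀ →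
          |Y (C₁ * |Real.log ε|) ξ - 1| ≤ ε ^ κ) ∧
        (∀ ξ : ℝ, -(2 * C₀) ≤ ξ → ξ ≤ -(ε ^ α) →
          |Y (C₁ * |Real.log ε|) ξ + 1| ≤ ε ^ κ) := by
  obtain ⟨C₁, hC₁, ε₀, hε₀, hmain⟩ := key f p μ C₀ hf hp hμ hC₀ hzeros hf'1 hf'0 hf_lin α κ hα hκ
  refine ⟨C₁, hC₁, ε₀, hε₀, fun ε hε hεlt => ⟨?_, ?_⟩⟩
  · intro ξ h1 h2
    exact hmain ε hε hεlt ξ h1 h2 (fun t => Y t ξ) (hY0 ξ) (hYode ξ)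
  · intro ξ h1 h2
    have h3 : ε ^ α ≤ -ξ := by linarith
    have h4 : -ξ ≤ 2 * C₀ := by linarith
    have hres := hmain ε hε hεlt (-ξ) h3 h4 (fun t => -(Y t ξ)) (by simp [hY0 ξ])
      (fun τ hτ => by
        have h5 : f (-(Y τ ξ)) = -f (Y τ ξ) := hodd _
        show HasDerivAt (fun t => -(Y t ξ)) (f (-(Y τ ξ))) τ
        rw [h5]
        exact (hYode ξ τ hτ).neg)
    have hres' : |-(Y (C₁ * |Real.log ε|) ξ) - 1| ≤ ε ^ κ := hres
    rw [show -(Y (C₁ * |Real.log ε|) ξ) - 1 = -(Y (C₁ * |Real.log ε|) ξ + 1) by ring,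
      abs_neg] at hres'
    exact hres'
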